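/- For an ω-bounded contract, for every (possibly infinite) set of actors A, every mempool P and every reachable state s, there exists a finite subset A₀ ⊆ A such that for every B with A₀ ⊆ B ⊆ A one has MEV_{A₀}(s, P) = MEV_B(s, P). -/

import Mathlib

/-- An abstract contract over actors `Ac`, token types `Tk`, transactions `Tx` and
contract states `Γ`.  A blockchain state is a pair of a contract state and a wallet
state `Ac → Tk → ℕ`.  Wallet states of initial states, and of any state produced by the
transition function, satisfy the finite tokens axiom (finitely many nonzero entries,
i.e. finite total sum of naturals). -/
structure Contract (Ac Tk Tx Γ : Type*) where
  /-- The partial labelled transition function. -/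
  step : Γ × (Ac → Tk → ℕ) → Tx → Option (Γ × (Ac → Tk → ℕ))
  /-- The set of initial blockchain states. -/
  init : Set (Γ × (Ac → Tk → ℕ))
  initFin : ∀ s ∈ init, (Function.support fun p : Ac × Tk => s.2 p.1 p.2).Finite
  stepFin : ∀ s tx s', step s tx = some s' →
    (Function.support fun p : Ac × Tk => s'.2 p.1 p.2).Finite

namespace Contract

variable {Ac Tk Tx Γ : Type*}

/-- The induced total execution relation: process the transactions in order, applying
the partial transition function when defined (valid transaction) and leaving the state
unchanged otherwise. -/
def exec (C : Contract Ac Tk Tx Γ) :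
    Γ × (Ac → Tk → ℕ) → List Tx → Γ × (Ac → Tk → ℕ)
  | s, [] => s
  | s, tx :: X => C.exec ((C.step s tx).getD s) X

/-- A state is reachable if some initial state reaches it by some sequence. -/
def Reachable (C : Contract Ac Tk Tx Γ) (s : Γ × (Ac → Tk → ℕ)) : Prop :=
  ∃ s₀ ∈ C.init, ∃ X : List Tx, C.exec s₀ X = s

end Contract

/-- The combined wallet of a set of actors `A` in a blockchain state `s`. -/
noncomputable def wal {Ac Tk Γ : Type*} (s : Γ × (Ac → Tk → ℕ)) (A : Set Ac) : Tk → ℕ :=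
  fun t => ∑ᶠ a ∈ A, s.2 a t

/-- `ω` is a wealth function: additive on finite-support wallets. -/
def IsWealth {Tk : Type*} (ω : (Tk → ℕ) → ℕ) : Prop :=
  ∀ w₀ w₁ : Tk → ℕ, (Function.support w₀).Finite → (Function.support w₁).Finite →
    ω (w₀ + w₁) = ω w₀ + ω w₁

/-- The gain `γ_A(s, X)` of actors `A` upon performing the sequence `X` from `s`. -/
noncomputable def Contract.gain {Ac Tk Tx Γ : Type*} (C : Contract Ac Tk Tx Γ) (ω : (Tk → ℕ) → ℕ)
    (A : Set Ac) (s : Γ × (Ac → Tk → ℕ)) (X : List Tx) : ℤ :=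
  (ω (wal (C.exec s X) A) : ℤ) - (ω (wal s A) : ℤ)

/-- ω-boundedness: the total wealth of all states reachable from an initial state is
bounded by a constant depending only on that initial state. -/
def Contract.Bounded {Ac Tk Tx Γ : Type*} (C : Contract Ac Tk Tx Γ)
    (ω : (Tk → ℕ) → ℕ) : Prop :=
  ∀ s₀ ∈ C.init, ∃ n : ℕ, ∀ X : List Tx, ω (wal (C.exec s₀ X) Set.univ) < n

/-- A transaction deducibility function `Λ`, mapping a set of actors and a set of
transactions to the set of transactions they can deduce, satisfying the axioms of
Definition "Transaction deducibility axioms". -/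
structure Deducibility (Ac Tx : Type*) where
  L : Set Ac → Set Tx → Set Tx
  extensive : ∀ (A : Set Ac) (T : Set Tx), T ⊆ L A T
  idem : ∀ (A : Set Ac) (T : Set Tx), L A (L A T) = L A T
  mono : ∀ ⦃A A' : Set Ac⦄ ⦃T T' : Set Tx⦄, A ⊆ A' → T ⊆ T' → L A T ⊆ L A' T'
  cont : ∀ (A : Set Ac) (Ti : ℕ → Set Tx), Monotone Ti →
    L A (⋃ i, Ti i) = ⋃ i, L A (Ti i)
  finCauses : ∀ T : Set Tx, T.Finite → ∃ A : Set Ac, A.Finite ∧ T ⊆ L A ∅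
  privKnow : ∀ A A' : Set Ac, L A ∅ ⊆ L A' ∅ → A ⊆ A'
  noShared : ∀ (A B : Set Ac) (T : Set Tx), L A T ∩ L B T ⊆ L (A ∩ B) T

/-- `X` is a finite sequence over the set `K` of transactions. -/
def SeqOver {Tx : Type*} (K : Set Tx) (X : List Tx) : Prop := ∀ tx ∈ X, tx ∈ K

/-- The set of gains obtainable by `A` in `s` by firing sequences deducible from their
private knowledge only; the unrealized gain `u_A(s)` is its greatest element. -/
def ugainSet {Ac Tk Tx Γ : Type*} (C : Contract Ac Tk Tx Γ) (ω : (Tk → ℕ) → ℕ)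
    (D : Deducibility Ac Tx) (A : Set Ac) (s : Γ × (Ac → Tk → ℕ)) : Set ℤ :=
  {g : ℤ | ∃ X : List Tx, SeqOver (D.L A ∅) X ∧ g = C.gain ω A s X}

/-- The set of external gains obtainable by `A` in `(s, P)` (`u` being the unrealized
gain `u_A(s)`); `MEV_A(s, P)` is its greatest element. -/
def mevSet {Ac Tk Tx Γ : Type*} (C : Contract Ac Tk Tx Γ) (ω : (Tk → ℕ) → ℕ)
    (D : Deducibility Ac Tx) (A : Set Ac) (s : Γ × (Ac → Tk → ℕ)) (P : Set Tx)
    (u : ℤ) : Set ℤ :=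
  {g : ℤ | ∃ X : List Tx, SeqOver (D.L A P) X ∧ g = C.gain ω A s X - u}

section MevAux

open Function Set

variable {Ac Tk Tx Γ : Type*}

/-- Finite-support predicate on blockchain states. -/
def FinSt (s : Γ × (Ac → Tk → ℕ)) : Prop :=
  (Function.support fun p : Ac × Tk => s.2 p.1 p.2).Finite

lemma Contract.exec_append' (C : Contract Ac Tk Tx Γ) (s : Γ × (Ac → Tk → ℕ))
    (X Y : List Tx) : C.exec s (X ++ Y) = C.exec (C.exec s X) Y := by
  induction X generalizing s with
  | nil => rfl
  | cons tx X ih => simp only [List.cons_append, Contract.exec]; exact ih _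

lemma finSt_exec (C : Contract Ac Tk Tx Γ) {s : Γ × (Ac → Tk → ℕ)} (hs : FinSt s)
    (X : List Tx) : FinSt (C.exec s X) := by
  induction X generalizing s with
  | nil => exact hs
  | cons tx X ih =>
    simp only [Contract.exec]
    cases h : C.step s tx with
    | none => simpa [h] using ih hs
    | some s' => simpa [h] using ih (C.stepFin s tx s' h)

lemma finSt_of_reachable (C : Contract Ac Tk Tx Γ) {s : Γ × (Ac → Tk → ℕ)}
    (hs : C.Reachable s) : FinSt s := by
  obtain ⟨s₀, h₀, X, rfl⟩ := hs
  exact finSt_exec C (C.initFin s₀ h₀) X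

lemma supp_a_fin {s : Γ × (Ac → Tk → ℕ)} (hs : FinSt s) (t : Tk) :
    (Function.support fun a => s.2 a t).Finite := by
  refine (hs.image Prod.fst).subset ?_
  intro a ha
  exact ⟨(a, t), ha, rfl⟩

lemma actor_supp_fin {s : Γ × (Ac → Tk → ℕ)} (hs : FinSt s) :
    {a : Ac | s.2 a ≠ 0}.Finite := by
  refine (hs.image Prod.fst).subset ?_
  intro a ha
  obtain ⟨t, ht⟩ : ∃ t, s.2 a t ≠ 0 := by
    by_contra h
    push_neg at h
    exact ha (funext h)
  exact ⟨(a, t), ht, rfl⟩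

lemma wal_supp_fin {s : Γ × (Ac → Tk → ℕ)} (hs : FinSt s) (S : Set Ac) :
    (Function.support (wal s S)).Finite := by
  refine (hs.image Prod.snd).subset ?_
  intro t ht
  obtain ⟨a, -, ha⟩ : ∃ a ∈ S, s.2 a t ≠ 0 := by
    by_contra h
    push_neg at h
    exact ht (finsum_mem_of_eqOn_zero h)
  exact ⟨(a, t), ha, rfl⟩

lemma wal_union {s : Γ × (Ac → Tk → ℕ)} (hs : FinSt s) {S T : Set Ac}
    (hd : Disjoint S T) : wal s (S ∪ T) = wal s S + wal s T := by
  funext t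
  exact finsum_mem_union' hd ((supp_a_fin hs t).inter_of_right S)
    ((supp_a_fin hs t).inter_of_right T)

lemma wal_zero {s : Γ × (Ac → Tk → ℕ)} {S : Set Ac}
    (h : ∀ a ∈ S, s.2 a = 0) : wal s S = 0 := by
  funext t
  exact finsum_mem_of_eqOn_zero fun a ha => by rw [h a ha]; rfl

lemma wealth_zero {ω : (Tk → ℕ) → ℕ} (hω : IsWealth ω) : ω 0 = 0 := by
  have := hω 0 0 (by simp) (by simp)
  simpa using this.symm

/-- Additivity of the gain over disjoint actor sets. -/
lemma gain_union (C : Contract Ac Tk Tx Γ) {ω : (Tk → ℕ) → ℕ} (hω : IsWealth ω)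
    {s : Γ × (Ac → Tk → ℕ)} (hs : FinSt s) {S T : Set Ac} (hd : Disjoint S T)
    (X : List Tx) :
    C.gain ω (S ∪ T) s X = C.gain ω S s X + C.gain ω T s X := by
  have hs' : FinSt (C.exec s X) := finSt_exec C hs X
  unfold Contract.gain
  rw [wal_union hs hd, wal_union hs' hd,
    hω _ _ (wal_supp_fin hs S) (wal_supp_fin hs T),
    hω _ _ (wal_supp_fin hs' S) (wal_supp_fin hs' T)]
  push_cast
  ring

/-- Split a gain along a subset of actors. -/
lemma gain_split (C : Contract Ac Tk Tx Γ) {ω : (Tk → ℕ) → ℕ} (hω : IsWealth ω)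
    {s : Γ × (Ac → Tk → ℕ)} (hs : FinSt s) {B A : Set Ac} (hBA : B ⊆ A)
    (X : List Tx) :
    C.gain ω A s X = C.gain ω B s X + C.gain ω (A \ B) s X := by
  rw [← gain_union C hω hs disjoint_sdiff_right X, Set.union_diff_cancel hBA]

lemma wealth_le_univ (C : Contract Ac Tk Tx Γ) {ω : (Tk → ℕ) → ℕ} (hω : IsWealth ω)
    {s : Γ × (Ac → Tk → ℕ)} (hs : FinSt s) (B : Set Ac) :
    ω (wal s B) ≤ ω (wal s Set.univ) := by
  have : (Set.univ : Set Ac) = B ∪ Bᶜ := by simp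
  rw [this, wal_union hs disjoint_compl_right,
    hω _ _ (wal_supp_fin hs B) (wal_supp_fin hs Bᶜ)]
  exact Nat.le_add_right _ _

end MevAux

section MevMain

open Function Set

variable {Ac Tk Tx Γ : Type*}

/-- The set of gains obtainable by actors `B` via sequences over a knowledge set `K`. -/
def gset (C : Contract Ac Tk Tx Γ) (ω : (Tk → ℕ) → ℕ) (K : Set Tx) (B : Set Ac)
    (s : Γ × (Ac → Tk → ℕ)) : Set ℤ :=
  {g : ℤ | ∃ X : List Tx, SeqOver K X ∧ g = C.gain ω B s X}

theorem mev_finite_actors'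
    {Ac Tk Tx Γ : Type*}
    (C : Contract Ac Tk Tx Γ) (ω : (Tk → ℕ) → ℕ) (hω : IsWealth ω)
    (hb : C.Bounded ω) (D : Deducibility Ac Tx)
    (A : Set Ac) (P : Set Tx) (s : Γ × (Ac → Tk → ℕ)) (hs : C.Reachable s) :
    ∃ A₀ : Set Ac, A₀ ⊆ A ∧ A₀.Finite ∧
      ∀ B : Set Ac, A₀ ⊆ B → B ⊆ A → ∀ u₀ uB m₀ mB : ℤ,
        IsGreatest (ugainSet C ω D A₀ s) u₀ →
        IsGreatest (ugainSet C ω D B s) uB →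
        IsGreatest (mevSet C ω D A₀ s P u₀) m₀ →
        IsGreatest (mevSet C ω D B s P uB) mB →
        m₀ = mB := by
  classical
  have hfs : FinSt s := finSt_of_reachable C hs
  obtain ⟨s₀, h₀, X₀, hX₀⟩ := hs
  obtain ⟨n, hn⟩ := hb s₀ h₀
  -- all gains from `s` are bounded by `n`
  have hbound : ∀ (B : Set Ac) (X : List Tx), C.gain ω B s X ≤ (n : ℤ) := by
    intro B X
    have hfex : FinSt (C.exec s X) := finSt_exec C hfs X
    have h1 : ω (wal (C.exec s X) B) ≤ ω (wal (C.exec s X) Set.univ) :=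
      wealth_le_univ C hω hfex B
    have h2 : ω (wal (C.exec s X) Set.univ) < n := by
      rw [← hX₀, ← C.exec_append']
      exact hn (X₀ ++ X)
    unfold Contract.gain
    omega
  -- every gain set has a greatest element
  have hgreat : ∀ (K : Set Tx) (B : Set Ac), ∃ g, IsGreatest (gset C ω K B s) g := by
    intro K B
    obtain ⟨g, hg1, hg2⟩ := Int.exists_greatest_of_bdd
      (P := fun g => g ∈ gset C ω K B s)
      ⟨n, fun z hz => by obtain ⟨X, -, rfl⟩ := hz; exact hbound B X⟩
      ⟨0, ⟨[], fun tx h => absurd h List.not_mem_nil,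
        by simp [Contract.gain, Contract.exec]⟩⟩
    exact ⟨g, hg1, fun z hz => hg2 z hz⟩
  obtain ⟨uA, huA⟩ := hgreat (D.L A ∅) A
  obtain ⟨MA, hMA⟩ := hgreat (D.L A P) A
  obtain ⟨Y, hYseq, hYg⟩ := huA.1
  obtain ⟨X, hXseq, hXg⟩ := hMA.1
  obtain ⟨AY, hAYfin, hAYsub⟩ := D.finCauses {tx | tx ∈ Y} Y.finite_toSet
  obtain ⟨AX, hAXfin, hAXsub⟩ := D.finCauses {tx | tx ∈ X} X.finite_toSet
  set A₀ : Set Ac :=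
    (A ∩ {a | s.2 a ≠ 0}) ∪ (A ∩ {a | (C.exec s X).2 a ≠ 0}) ∪
      (A ∩ {a | (C.exec s Y).2 a ≠ 0}) ∪ (A ∩ AX) ∪ (A ∩ AY) with hA₀def
  have hsub_s : A ∩ {a | s.2 a ≠ 0} ⊆ A₀ := fun a ha =>
    Or.inl (Or.inl (Or.inl (Or.inl ha)))
  have hsub_X : A ∩ {a | (C.exec s X).2 a ≠ 0} ⊆ A₀ := fun a ha =>
    Or.inl (Or.inl (Or.inl (Or.inr ha)))
  have hsub_Y : A ∩ {a | (C.exec s Y).2 a ≠ 0} ⊆ A₀ := fun a ha =>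
    Or.inl (Or.inl (Or.inr ha))
  have hsub_AX : A ∩ AX ⊆ A₀ := fun a ha => Or.inl (Or.inr ha)
  have hsub_AY : A ∩ AY ⊆ A₀ := fun a ha => Or.inr ha
  have hA₀A : A₀ ⊆ A := by
    rw [hA₀def]
    refine Set.union_subset (Set.union_subset (Set.union_subset (Set.union_subset ?_ ?_) ?_) ?_) ?_ <;>
      exact Set.inter_subset_left
  have hA₀fin : A₀.Finite := by
    rw [hA₀def]
    exact (((((actor_supp_fin hfs).inter_of_right A).union
      ((actor_supp_fin (finSt_exec C hfs X)).inter_of_right A)).union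
      ((actor_supp_fin (finSt_exec C hfs Y)).inter_of_right A)).union
      (hAXfin.inter_of_right A)).union (hAYfin.inter_of_right A)
  -- key invariance claim
  have key : ∀ (T : Set Tx) (W : List Tx) (AW : Set Ac) (G : ℤ),
      IsGreatest (gset C ω (D.L A T) A s) G → SeqOver (D.L A T) W →
      G = C.gain ω A s W → ({tx | tx ∈ W} ⊆ D.L AW ∅) → (A ∩ AW ⊆ A₀) →
      (A ∩ {a | (C.exec s W).2 a ≠ 0} ⊆ A₀) →
      ∀ B : Set Ac, A₀ ⊆ B → B ⊆ A → IsGreatest (gset C ω (D.L B T) B s) G := by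
    intro T W AW G hG hWseq hWg hWded hAW hWsupp B hA₀B hBA
    have hzero_s : wal s (A \ B) = 0 := wal_zero (fun a ha => by
      by_contra h
      exact ha.2 (hA₀B (hsub_s ⟨ha.1, h⟩)))
    constructor
    · refine ⟨W, ?_, ?_⟩
      · intro tx htx
        have h2 : tx ∈ D.L AW T := D.mono (subset_refl AW) (Set.empty_subset T) (hWded htx)
        have h4 : tx ∈ D.L (AW ∩ A) T := D.noShared AW A T ⟨h2, hWseq tx htx⟩
        exact D.mono (fun a ha => hA₀B (hAW ⟨ha.2, ha.1⟩)) (subset_refl T) h4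
      · have hsplit := gain_split C hω hfs hBA W
        have hzW : C.gain ω (A \ B) s W = 0 := by
          have h2 : wal (C.exec s W) (A \ B) = 0 := wal_zero (fun a ha => by
            by_contra h
            exact ha.2 (hA₀B (hWsupp ⟨ha.1, h⟩)))
          unfold Contract.gain
          rw [hzero_s, h2]
          ring
        rw [hWg, hsplit, hzW, add_zero]
    · intro g hg
      obtain ⟨Z, hZseq, rfl⟩ := hg
      have hZA : SeqOver (D.L A T) Z := fun tx htx =>
        D.mono hBA (subset_refl T) (hZseq tx htx)
      have h1 := gain_split C hω hfs hBA Z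
      have h2 : 0 ≤ C.gain ω (A \ B) s Z := by
        unfold Contract.gain
        rw [hzero_s, wealth_zero hω]
        simp
      have h3 : C.gain ω A s Z ≤ G := hG.2 ⟨Z, hZA, rfl⟩
      linarith
  refine ⟨A₀, hA₀A, hA₀fin, ?_⟩
  intro B hA₀B hBA u₀ uB m₀ mB hu₀ huB hm₀ hmB
  have kY := key ∅ Y AY uA huA hYseq hYg hAYsub hsub_AY hsub_Y
  have kX := key P X AX MA hMA hXseq hXg hAXsub hsub_AX hsub_X
  have hu₀A : u₀ = uA := hu₀.unique (kY A₀ (subset_refl A₀) hA₀A)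
  have huBA : uB = uA := huB.unique (kY B hA₀B hBA)
  have hm₀A : m₀ = MA - u₀ := by
    obtain ⟨⟨W', hW's, hW'g⟩, hub⟩ := kX A₀ (subset_refl A₀) hA₀A
    refine hm₀.unique ⟨⟨W', hW's, by rw [← hW'g]⟩, ?_⟩
    intro g hg
    obtain ⟨Z, hZ, rfl⟩ := hg
    have := hub ⟨Z, hZ, rfl⟩
    linarith
  have hmBA : mB = MA - uB := by
    obtain ⟨⟨W', hW's, hW'g⟩, hub⟩ := kX B hA₀B hBA
    refine hmB.unique ⟨⟨W', hW's, by rw [← hW'g]⟩, ?_⟩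
    intro g hg
    obtain ⟨Z, hZ, rfl⟩ := hg
    have := hub ⟨Z, hZ, rfl⟩
    linarith
  omega

end MevMain

/-- for an ω-bounded contract, for every (possibly infinite) set of actors
`A`, mempool `P` and reachable state `s`, there is a finite subset `A₀ ⊆ A` such that
`MEV_{A₀}(s, P) = MEV_B(s, P)` for every `B` with `A₀ ⊆ B ⊆ A`. -/
theorem mev_finite_actors
    {Ac Tk Tx Γ : Type*} [Countable Ac] [Infinite Ac]
    (C : Contract Ac Tk Tx Γ) (ω : (Tk → ℕ) → ℕ) (hω : IsWealth ω)
    (hb : C.Bounded ω) (D : Deducibility Ac Tx)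
    (A : Set Ac) (P : Set Tx) (s : Γ × (Ac → Tk → ℕ)) (hs : C.Reachable s) :
    ∃ A₀ : Set Ac, A₀ ⊆ A ∧ A₀.Finite ∧
      ∀ B : Set Ac, A₀ ⊆ B → B ⊆ A → ∀ u₀ uB m₀ mB : ℤ,
        IsGreatest (ugainSet C ω D A₀ s) u₀ →
        IsGreatest (ugainSet C ω D B s) uB →
        IsGreatest (mevSet C ω D A₀ s P u₀) m₀ →
        IsGreatest (mevSet C ω D B s P uB) mB →
        m₀ = mB :=
  (mev_finite_actors' C ω hω hb D A P s hs).elim fun A₀ h =>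
    ⟨A₀, h.1, h.2.1, h.2.2⟩
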